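/- arXiv:1204.5123 — 2 statements merged into one kernel-verified Lean document; each statement's English description precedes it below -/
import Mathlib

section
/- For all ρ > 0 and all P ∈ ℝ^3, one has ρ - sqrt(P·P + 1) + sqrt((|P| - ρ)^2 + 1) > ρ / (2(P·P + 1)). -/
theorem gap_lower_bound (ρ : ℝ) (hρ : 0 < ρ) (P : EuclideanSpace ℝ (Fin 3)) :
    ρ - Real.sqrt ((inner ℝ P P : ℝ) + 1) + Real.sqrt ((‖P‖ - ρ) ^ 2 + 1)
      > ρ / (2 * ((inner ℝ P P : ℝ) + 1)) := by
  have hx : (0:ℝ) ≤ ‖P‖ := norm_nonneg P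
  set x := ‖P‖ with hxdef
  have hip : (inner ℝ P P : ℝ) = x ^ 2 := by
    rw [real_inner_self_eq_norm_sq]
  rw [hip]
  set s := Real.sqrt (x ^ 2 + 1) with hs
  set t := Real.sqrt ((x - ρ) ^ 2 + 1) with ht
  have hs2 : s ^ 2 = x ^ 2 + 1 := Real.sq_sqrt (by positivity)
  have ht2 : t ^ 2 = (x - ρ) ^ 2 + 1 := Real.sq_sqrt (by positivity)
  have hs0 : 0 < s := Real.sqrt_pos.2 (by positivity)
  have ht0 : 0 < t := Real.sqrt_pos.2 (by positivity)
  have hsx : x < s := by nlinarith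
  have htx : x - ρ < t := by nlinarith [abs_nonneg (x - ρ), sq_abs (x - ρ), le_abs_self (x - ρ)]
  -- key polynomial inequality
  have hK : 2 * s ^ 2 * (s + t + ρ - 2 * x) > s + t := by
    rcases le_or_gt (2 * x) ρ with hc | hc
    · nlinarith [mul_pos hs0 ht0, add_pos hs0 ht0, mul_pos hs0 hs0]
    · nlinarith [mul_nonneg hs0.le (sq_nonneg (s - x)),
        mul_nonneg ht0.le (sq_nonneg (t - (x - ρ))),
        mul_pos (mul_pos hρ (by linarith : (0:ℝ) < 2 * x - ρ)) (sub_pos.2 htx),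
        sq_nonneg (s - x), sq_nonneg (t - (x - ρ))]
  rw [gt_iff_lt, div_lt_iff₀ (by positivity)]
  -- (ρ - s + t) * (s + t) = ρ * (s + t + ρ - 2x)
  have hid : (ρ - s + t) * (s + t) = ρ * (s + t + ρ - 2 * x) := by nlinarith [hs2, ht2]
  have hst : 0 < s + t := by linarith
  nlinarith [mul_pos hρ (sub_pos.2 hK), hid, hst, mul_pos hρ hst]
end

section
/- The function f(r) = sqrt((|P| - r)^2 + 1) - sqrt(|P|^2 + 1) + max{ρ, r}, defined for r ≥ 0 with fixed ρ > 0 and P ∈ ℝ^3, satisfies inf_{r ≥ 0} f(r) ≥ min{ρ, 1} / (2(|P|^2 + 1)). -/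
lemma inf_gap_key (ρ p r : ℝ) (hρ : 0 < ρ) (hp : 0 ≤ p) (hr : 0 ≤ r) :
    min ρ 1 / (2 * (p ^ 2 + 1)) ≤
      Real.sqrt ((p - r) ^ 2 + 1) - Real.sqrt (p ^ 2 + 1) + max ρ r := by
  set s1 := Real.sqrt ((p - r) ^ 2 + 1) with hs1def
  set s2 := Real.sqrt (p ^ 2 + 1) with hs2def
  have hs1 : s1 ^ 2 = (p - r) ^ 2 + 1 := Real.sq_sqrt (by positivity)
  have hs2 : s2 ^ 2 = p ^ 2 + 1 := Real.sq_sqrt (by positivity)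
  have hs1' : 1 ≤ s1 := by
    have h := Real.sqrt_le_sqrt (show (1:ℝ) ≤ (p - r) ^ 2 + 1 by nlinarith [sq_nonneg (p - r)])
    rwa [Real.sqrt_one] at h
  have hs2' : 1 ≤ s2 := by
    have h := Real.sqrt_le_sqrt (show (1:ℝ) ≤ p ^ 2 + 1 by nlinarith)
    rwa [Real.sqrt_one] at h
  have hA : s2 ^ 2 - r * p ≤ s1 * s2 := by
    have h1 : (s1 * s2) ^ 2 = (s2 ^ 2 - r * p) ^ 2 + r ^ 2 := by
      rw [mul_pow, hs1, hs2]; ring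
    nlinarith [mul_nonneg (le_trans zero_le_one hs1') (le_trans zero_le_one hs2')]
  have hmin : min ρ 1 ≤ ρ := min_le_left _ _
  have hden : (0:ℝ) < 2 * (p ^ 2 + 1) := by positivity
  rw [div_le_iff₀ hden, ← hs2]
  rcases le_total r ρ with h | h
  · rw [max_eq_left h]
    -- need: min ρ 1 ≤ (s1 - s2 + ρ) * (2 * s2^2)
    -- from hA: s1 * s2 ≥ s2^2 - r*p, and 2*p*s2 ≤ 2*p^2+1 = 2*s2^2 - 1
    have hpq : 2 * p * s2 ≤ 2 * s2 ^ 2 - 1 := by nlinarith [sq_nonneg (s2 - p)]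
    nlinarith [mul_le_mul_of_nonneg_left hpq (le_of_lt hρ),
      mul_le_mul_of_nonneg_right hA (show (0:ℝ) ≤ 2 by norm_num),
      mul_nonneg hr hp, mul_le_mul_of_nonneg_left hpq hr]
  · rw [max_eq_right h]
    have hpq : 2 * p * s2 ≤ 2 * s2 ^ 2 - 1 := by nlinarith [sq_nonneg (s2 - p)]
    nlinarith [mul_le_mul_of_nonneg_right hA (show (0:ℝ) ≤ 2 by norm_num),
      mul_le_mul_of_nonneg_left hpq hr, hmin.trans h]

theorem inf_gap_bound (ρ : ℝ) (hρ : 0 < ρ) (P : EuclideanSpace ℝ (Fin 3)) :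
    min ρ 1 / (2 * (‖P‖ ^ 2 + 1)) ≤
      sInf ((fun r : ℝ =>
        Real.sqrt ((‖P‖ - r) ^ 2 + 1) - Real.sqrt (‖P‖ ^ 2 + 1) + max ρ r) '' Set.Ici 0) := by
  apply le_csInf
  · exact ⟨_, ⟨0, Set.mem_Ici.mpr le_rfl, rfl⟩⟩
  · rintro b ⟨r, hr, rfl⟩
    exact inf_gap_key ρ ‖P‖ r hρ (norm_nonneg P) hr
end
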